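/- Let a(t), b(t), c(t) solve a' = a² + bc, b' = b² + ac, c' = c² + ab on [0,T) with S := 2(a+b+c) > 0. Define Q := 2(a²+b²+c²+ab+ac+bc) (so Q = |Ric|²). Then (Q/S²)' = −(4/S³)(a²(b−c)² + b²(a−c)² + c²(a−b)²) ≤ 0; in particular Q/S² is monotone non-increasing. -/

import Mathlib

theorem stmt14 (a b c : ℝ → ℝ) (T : ℝ)
    (ha : ∀ t ∈ Set.Ico (0:ℝ) T, HasDerivAt a ((a t)^2 + b t * c t) t)
    (hb : ∀ t ∈ Set.Ico (0:ℝ) T, HasDerivAt b ((b t)^2 + a t * c t) t)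
    (hc : ∀ t ∈ Set.Ico (0:ℝ) T, HasDerivAt c ((c t)^2 + a t * b t) t)
    (hS : ∀ t ∈ Set.Ico (0:ℝ) T, 0 < 2 * (a t + b t + c t)) :
    (∀ t ∈ Set.Ico (0:ℝ) T,
      HasDerivAt
        (fun s => 2 * ((a s)^2 + (b s)^2 + (c s)^2 + a s * b s + a s * c s + b s * c s)
          / (2 * (a s + b s + c s))^2)
        (-(4 / (2 * (a t + b t + c t))^3)
          * ((a t)^2 * (b t - c t)^2 + (b t)^2 * (a t - c t)^2 + (c t)^2 * (a t - b t)^2)) t ∧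
      -(4 / (2 * (a t + b t + c t))^3)
          * ((a t)^2 * (b t - c t)^2 + (b t)^2 * (a t - c t)^2 + (c t)^2 * (a t - b t)^2) ≤ 0) ∧
    (∀ s ∈ Set.Ico (0:ℝ) T, ∀ t ∈ Set.Ico (0:ℝ) T, s ≤ t →
      2 * ((a t)^2 + (b t)^2 + (c t)^2 + a t * b t + a t * c t + b t * c t)
          / (2 * (a t + b t + c t))^2
        ≤ 2 * ((a s)^2 + (b s)^2 + (c s)^2 + a s * b s + a s * c s + b s * c s)
          / (2 * (a s + b s + c s))^2) := by
  set f : ℝ → ℝ := fun s => 2 * ((a s)^2 + (b s)^2 + (c s)^2 + a s * b s + a s * c s + b s * c s)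
          / (2 * (a s + b s + c s))^2 with hf
  have key : ∀ t ∈ Set.Ico (0:ℝ) T,
      HasDerivAt f (-(4 / (2 * (a t + b t + c t))^3)
          * ((a t)^2 * (b t - c t)^2 + (b t)^2 * (a t - c t)^2 + (c t)^2 * (a t - b t)^2)) t := by
    intro t ht
    have ha' := ha t ht; have hb' := hb t ht; have hc' := hc t ht
    have hSpos := hS t ht
    have hSne : (2 * (a t + b t + c t)) ≠ 0 := ne_of_gt hSpos
    have hnum : HasDerivAt
        (fun s => 2 * ((a s)^2 + (b s)^2 + (c s)^2 + a s * b s + a s * c s + b s * c s))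
        (2 * (2 * a t * ((a t)^2 + b t * c t) + 2 * b t * ((b t)^2 + a t * c t)
          + 2 * c t * ((c t)^2 + a t * b t)
          + (((a t)^2 + b t * c t) * b t + a t * ((b t)^2 + a t * c t))
          + (((a t)^2 + b t * c t) * c t + a t * ((c t)^2 + a t * b t))
          + (((b t)^2 + a t * c t) * c t + b t * ((c t)^2 + a t * b t)))) t := by
      have := ((((((ha'.fun_pow 2).fun_add (hb'.fun_pow 2)).fun_add (hc'.fun_pow 2)).fun_add
        (ha'.fun_mul hb')).fun_add (ha'.fun_mul hc')).fun_add (hb'.fun_mul hc')).const_mul 2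
      refine this.congr_deriv ?_
      ring
    have hden : HasDerivAt (fun s => (2 * (a s + b s + c s))^2)
        (2 * (2 * (a t + b t + c t)) * (2 * (((a t)^2 + b t * c t) + ((b t)^2 + a t * c t)
          + ((c t)^2 + a t * b t)))) t := by
      have := (((ha'.fun_add hb').fun_add hc').const_mul 2).fun_pow 2
      refine this.congr_deriv ?_
      ring
    have hdne : ((2 * (a t + b t + c t))^2) ≠ 0 := pow_ne_zero _ hSne
    have := hnum.fun_div hden hdne
    refine this.congr_deriv ?_
    field_simp
    ring
  constructor
  · intro t ht
    refine ⟨key t ht, ?_⟩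
    have hSpos := hS t ht
    have h1 : 0 ≤ 4 / (2 * (a t + b t + c t))^3 := by positivity
    have h2 : 0 ≤ (a t)^2 * (b t - c t)^2 + (b t)^2 * (a t - c t)^2 + (c t)^2 * (a t - b t)^2 := by
      positivity
    nlinarith [mul_nonneg h1 h2]
  · have hcont : ContinuousOn f (Set.Ico 0 T) := fun t ht =>
      ((key t ht).continuousAt).continuousWithinAt
    have hint : interior (Set.Ico (0:ℝ) T) = Set.Ioo 0 T := interior_Ico
    have hmem : ∀ t ∈ interior (Set.Ico (0:ℝ) T), t ∈ Set.Ico (0:ℝ) T := by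
      rw [hint]; exact fun t ht => ⟨le_of_lt ht.1, ht.2⟩
    have hdiff : DifferentiableOn ℝ f (interior (Set.Ico 0 T)) := fun t ht =>
      ((key t (hmem t ht)).differentiableAt).differentiableWithinAt
    have hderiv : ∀ t ∈ interior (Set.Ico (0:ℝ) T), deriv f t ≤ 0 := by
      intro t ht
      rw [(key t (hmem t ht)).deriv]
      have hSpos := hS t (hmem t ht)
      have h1 : 0 ≤ 4 / (2 * (a t + b t + c t))^3 := by positivity
      have h2 : 0 ≤ (a t)^2 * (b t - c t)^2 + (b t)^2 * (a t - c t)^2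
          + (c t)^2 * (a t - b t)^2 := by positivity
      nlinarith [mul_nonneg h1 h2]
    have hanti : AntitoneOn f (Set.Ico 0 T) :=
      antitoneOn_of_deriv_nonpos (convex_Ico 0 T) hcont hdiff hderiv
    intro s hs t ht hst
    exact hanti hs ht hst
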